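/- If M is additionally even (M(x) = M(−x) for all x), then ∫_{0}^{2} x² M(x) dx = 1/3. -/

import Mathlib

open Real MeasureTheory Set

/-- A measurable function bounded by 1 and supported in `[-1,1]`, multiplied by a
continuous weight, is integrable. -/
private lemma integrable_wh (h w : ℝ → ℝ) (hm : Measurable h)
    (h0 : ∀ x, x ∉ Icc (-1:ℝ) 1 → h x = 0) (h1 : ∀ x, |h x| ≤ 1)
    (hw : Continuous w) : Integrable (fun x => w x * h x) := by
  obtain ⟨C, hC⟩ := (isCompact_Icc (a := (-1:ℝ)) (b := 1)).exists_bound_of_continuousOn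
    hw.continuousOn
  have hCint : Integrable ((Icc (-1:ℝ) 1).indicator (fun _ => C)) := by
    rw [integrable_indicator_iff measurableSet_Icc]
    exact (integrableOn_const_iff).mpr (Or.inr (by simp [Real.volume_Icc]))
  refine hCint.mono' ((hw.measurable.mul hm).aestronglyMeasurable) ?_
  filter_upwards with x
  by_cases hx : x ∈ Icc (-1:ℝ) 1
  · rw [indicator_of_mem hx]
    calc ‖w x * h x‖ = |w x| * |h x| := abs_mul _ _
    _ ≤ C * 1 := by
        refine mul_le_mul ?_ (h1 x) (abs_nonneg _) ((abs_nonneg (w x)).trans ?_)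
        · simpa using hC x hx
        · simpa using hC x hx
    _ = C := mul_one C
  · rw [indicator_of_notMem hx, h0 x hx, mul_zero]
    simp

/-- Product integrability of the convolution-type integrand. -/
private lemma prod_int (f g w : ℝ → ℝ) (hf : Measurable f) (hgm : Measurable g)
    (hf0 : ∀ x, x ∉ Icc (-1:ℝ) 1 → f x = 0) (hg0 : ∀ x, x ∉ Icc (-1:ℝ) 1 → g x = 0)
    (hf1 : ∀ x, |f x| ≤ 1) (hg1 : ∀ x, |g x| ≤ 1) (hw : Continuous w) :
    Integrable (fun p : ℝ × ℝ => w p.1 * (f p.2 * g (p.1 + p.2)))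
      (volume.prod volume) := by
  obtain ⟨C, hC⟩ := (isCompact_Icc (a := (-2:ℝ)) (b := 2)).exists_bound_of_continuousOn
    hw.continuousOn
  have hmeas : Measurable (fun p : ℝ × ℝ => w p.1 * (f p.2 * g (p.1 + p.2))) := by
    exact (hw.measurable.comp measurable_fst).mul
      ((hf.comp measurable_snd).mul (hgm.comp (measurable_fst.add measurable_snd)))
  have hsm : MeasurableSet ((Icc (-2:ℝ) 2) ×ˢ (Icc (-1:ℝ) 1)) :=
    measurableSet_Icc.prod measurableSet_Icc
  have hCint : Integrable (((Icc (-2:ℝ) 2) ×ˢ (Icc (-1:ℝ) 1)).indicator (fun _ => C))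
      (volume.prod volume) := by
    rw [integrable_indicator_iff hsm]
    refine (integrableOn_const_iff).mpr (Or.inr ?_)
    rw [Measure.prod_prod]
    simp [Real.volume_Icc]
    norm_num
  refine hCint.mono' hmeas.aestronglyMeasurable ?_
  filter_upwards with p
  by_cases hp : p ∈ (Icc (-2:ℝ) 2) ×ˢ (Icc (-1:ℝ) 1)
  · rw [indicator_of_mem hp]
    have h1 : |w p.1| ≤ C := by simpa using hC p.1 hp.1
    calc ‖w p.1 * (f p.2 * g (p.1 + p.2))‖
        = |w p.1| * (|f p.2| * |g (p.1 + p.2)|) := by rw [Real.norm_eq_abs, abs_mul, abs_mul]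
    _ ≤ C * (1 * 1) := by
        refine mul_le_mul h1 (mul_le_mul (hf1 _) (hg1 _) (abs_nonneg _) zero_le_one)
          (mul_nonneg (abs_nonneg _) (abs_nonneg _)) ((abs_nonneg (w p.1)).trans h1)
    _ = C := by ring
  · rw [indicator_of_notMem hp]
    rw [mem_prod, not_and_or] at hp
    rcases hp with hp | hp
    · by_cases hp2 : p.2 ∈ Icc (-1:ℝ) 1
      · have : g (p.1 + p.2) = 0 := by
          apply hg0
          simp only [mem_Icc, not_and_or, not_le] at hp ⊢
          rcases hp with h | h
          · exact Or.inl (by linarith [hp2.2])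
          · exact Or.inr (by linarith [hp2.1])
        simp [this]
      · simp [hf0 _ hp2]
    · simp [hf0 _ hp]

/-- The Fubini/translation formula for moments of the convolution. -/
private lemma moment_formula (f g w : ℝ → ℝ) (hf : Measurable f) (hgm : Measurable g)
    (hf0 : ∀ x, x ∉ Icc (-1:ℝ) 1 → f x = 0) (hg0 : ∀ x, x ∉ Icc (-1:ℝ) 1 → g x = 0)
    (hf1 : ∀ x, |f x| ≤ 1) (hg1 : ∀ x, |g x| ≤ 1) (hw : Continuous w) :
    ∫ x, w x * ∫ t, f t * g (x + t) = ∫ t, f t * ∫ u, w (u - t) * g u := by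
  have hFi := prod_int f g w hf hgm hf0 hg0 hf1 hg1 hw
  have step1 : ∫ x, w x * ∫ t, f t * g (x + t)
      = ∫ x, ∫ t, w x * (f t * g (x + t)) := by
    refine integral_congr_ae (Filter.Eventually.of_forall fun x => ?_)
    exact (integral_const_mul (w x) _).symm
  rw [step1]
  rw [integral_integral_swap hFi]
  refine integral_congr_ae (Filter.Eventually.of_forall fun t => ?_)
  dsimp only
  have step2 : ∫ x, w x * (f t * g (x + t)) = ∫ x, f t * (w x * g (x + t)) := by
    refine integral_congr_ae (Filter.Eventually.of_forall fun x => ?_)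
    ring
  rw [step2, integral_const_mul]
  congr 1
  have := MeasureTheory.integral_add_right_eq_self (μ := volume)
    (fun u => w (u - t) * g u) t
  rw [← this]
  refine integral_congr_ae (Filter.Eventually.of_forall fun x => ?_)
  simp

theorem even_M_second_moment (f g M : ℝ → ℝ)
    (hf_meas : Measurable f)
    (hf01 : ∀ x ∈ Icc (-1:ℝ) 1, 0 ≤ f x ∧ f x ≤ 1)
    (hf_supp : ∀ x, x ∉ Icc (-1:ℝ) 1 → f x = 0)
    (hf_int : ∫ x in (-1:ℝ)..1, f x = 1)
    (hg : ∀ x, g x = if x ∈ Icc (-1:ℝ) 1 then 1 - f x else 0)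
    (hM : ∀ x, M x = ∫ t in (-1:ℝ)..1, f t * g (x + t))
    (hMeven : ∀ x, M x = M (-x)) :
    ∫ x in (0:ℝ)..2, x^2 * M x = 1/3 := by
  -- basic properties of g and f
  have hg_meas : Measurable g := by
    have hgeq : g = fun x => if x ∈ Icc (-1:ℝ) 1 then 1 - f x else 0 := funext hg
    rw [hgeq]
    exact Measurable.ite measurableSet_Icc (measurable_const.sub hf_meas) measurable_const
  have hg0 : ∀ x, x ∉ Icc (-1:ℝ) 1 → g x = 0 := fun x hx => by rw [hg x, if_neg hx]
  have hf1 : ∀ x, |f x| ≤ 1 := by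
    intro x; by_cases hx : x ∈ Icc (-1:ℝ) 1
    · obtain ⟨h0, h1⟩ := hf01 x hx; rw [abs_le]; constructor <;> linarith
    · rw [hf_supp x hx]; simp
  have hg1 : ∀ x, |g x| ≤ 1 := by
    intro x; rw [hg x]; by_cases hx : x ∈ Icc (-1:ℝ) 1
    · rw [if_pos hx]; obtain ⟨h0, h1⟩ := hf01 x hx; rw [abs_le]; constructor <;> linarith
    · rw [if_neg hx]; simp
  -- integrability
  have hfi : Integrable f := by
    simpa using integrable_wh f (fun _ => 1) hf_meas hf_supp hf1 continuous_const
  have hfi1 : Integrable (fun t => t * f t) :=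
    integrable_wh f id hf_meas hf_supp hf1 continuous_id
  have hfi2 : Integrable (fun t => t^2 * f t) :=
    integrable_wh f (fun x => x^2) hf_meas hf_supp hf1 (continuous_pow 2)
  have ggi : Integrable g := by
    simpa using integrable_wh g (fun _ => 1) hg_meas hg0 hg1 continuous_const
  have ggi1 : Integrable (fun t => t * g t) :=
    integrable_wh g id hg_meas hg0 hg1 continuous_id
  have ggi2 : Integrable (fun t => t^2 * g t) :=
    integrable_wh g (fun x => x^2) hg_meas hg0 hg1 (continuous_pow 2)
  -- conversions between Icc and interval integrals
  have hIccIoc : ∀ (h : ℝ → ℝ), ∫ t in Icc (-1:ℝ) 1, h t = ∫ t in (-1:ℝ)..1, h t := by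
    intro h
    rw [integral_Icc_eq_integral_Ioc,
      intervalIntegral.integral_of_le (by norm_num : (-1:ℝ) ≤ 1)]
  have Af : ∫ t, f t = 1 := by
    rw [← setIntegral_eq_integral_of_forall_compl_eq_zero hf_supp, hIccIoc, hf_int]
  have hfIcc : ∫ t in Icc (-1:ℝ) 1, f t = 1 := by rw [hIccIoc]; exact hf_int
  have hfIcc1 : ∫ t in Icc (-1:ℝ) 1, t * f t = ∫ t, t * f t :=
    setIntegral_eq_integral_of_forall_compl_eq_zero
      (fun x hx => by rw [hf_supp x hx, mul_zero])
  have hfIcc2 : ∫ t in Icc (-1:ℝ) 1, t^2 * f t = ∫ t, t^2 * f t :=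
    setIntegral_eq_integral_of_forall_compl_eq_zero
      (fun x hx => by rw [hf_supp x hx, mul_zero])
  have hconst : ∫ t in Icc (-1:ℝ) 1, (1:ℝ) = 2 := by
    simp [Real.volume_Icc]; norm_num
  have hconst_int : IntegrableOn (fun _ => (1:ℝ)) (Icc (-1:ℝ) 1) :=
    (integrableOn_const_iff).mpr (Or.inr (by simp [Real.volume_Icc]))
  have hid_int : IntegrableOn (fun t : ℝ => t) (Icc (-1:ℝ) 1) :=
    continuous_id.integrableOn_Icc
  have hsq_int : IntegrableOn (fun t : ℝ => t^2) (Icc (-1:ℝ) 1) :=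
    (continuous_pow 2).integrableOn_Icc
  have hid : ∫ t in Icc (-1:ℝ) 1, t = 0 := by
    rw [hIccIoc]
    simp
  have hsq : ∫ t in Icc (-1:ℝ) 1, t^2 = 2/3 := by
    rw [hIccIoc]
    rw [integral_pow]
    norm_num
  set a := ∫ t, t * f t with ha
  set b := ∫ t, t^2 * f t with hb
  -- moments of g
  have Ag : ∫ t, g t = 1 := by
    rw [← setIntegral_eq_integral_of_forall_compl_eq_zero hg0]
    have e : ∫ t in Icc (-1:ℝ) 1, g t = ∫ t in Icc (-1:ℝ) 1, ((1:ℝ) - f t) := by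
      refine setIntegral_congr_fun measurableSet_Icc fun x hx => ?_
      rw [hg x, if_pos hx]
    rw [e, integral_sub hconst_int hfi.integrableOn, hconst, hfIcc]
    norm_num
  have Mgv : ∫ u, u * g u = -a := by
    rw [← setIntegral_eq_integral_of_forall_compl_eq_zero
      (fun x hx => by rw [hg0 x hx, mul_zero])]
    have e : ∫ t in Icc (-1:ℝ) 1, t * g t = ∫ t in Icc (-1:ℝ) 1, (t - t * f t) := by
      refine setIntegral_congr_fun measurableSet_Icc fun x hx => ?_
      rw [hg x, if_pos hx]; ring
    rw [e, integral_sub hid_int hfi1.integrableOn, hid, hfIcc1]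
    ring
  have Sgv : ∫ u, u^2 * g u = 2/3 - b := by
    rw [← setIntegral_eq_integral_of_forall_compl_eq_zero
      (fun x hx => by rw [hg0 x hx, mul_zero])]
    have e : ∫ t in Icc (-1:ℝ) 1, t^2 * g t = ∫ t in Icc (-1:ℝ) 1, (t^2 - t^2 * f t) := by
      refine setIntegral_congr_fun measurableSet_Icc fun x hx => ?_
      rw [hg x, if_pos hx]; ring
    rw [e, integral_sub hsq_int hfi2.integrableOn, hsq, hfIcc2]
  -- pointwise description of M as a whole-line integral
  have hMeq : ∀ x, M x = ∫ t, f t * g (x + t) := by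
    intro x
    rw [hM x, ← hIccIoc (fun t => f t * g (x + t)),
      setIntegral_eq_integral_of_forall_compl_eq_zero
        (fun t ht => by rw [hf_supp t ht, zero_mul])]
  -- inner integrals
  have inner1 : ∀ t : ℝ, ∫ u, (u - t) * g u = -a - t := by
    intro t
    have e : (fun u => (u - t) * g u) = fun u => u * g u - t * g u := by
      funext u; ring
    rw [e, integral_sub ggi1 (ggi.const_mul t), integral_const_mul, Mgv, Ag]
    ring
  have inner2 : ∀ t : ℝ, ∫ u, (u - t)^2 * g u = (2/3 - b) + 2*t*a + t^2 := by
    intro t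
    have e : (fun u => (u - t)^2 * g u)
        = fun u => (u^2 * g u - (2*t) * (u * g u)) + t^2 * g u := by
      funext u; ring
    have h1 : Integrable (fun u : ℝ => u^2 * g u - 2*t * (u * g u)) :=
      ggi2.sub (ggi1.const_mul (2*t))
    have h2 : Integrable (fun u : ℝ => t^2 * g u) := ggi.const_mul (t^2)
    rw [e, integral_add h1 h2, integral_sub ggi2 (ggi1.const_mul (2*t)),
      integral_const_mul, integral_const_mul, Sgv, Mgv, Ag]
    ring
  -- first moment of M
  have key1 := moment_formula f g id hf_meas hg_meas hf_supp hg0 hf1 hg1 continuous_id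
  simp only [id_eq] at key1
  have I1 : ∫ x, x * M x = -(2*a) := by
    calc ∫ x, x * M x = ∫ x, x * ∫ t, f t * g (x + t) := by
          refine integral_congr_ae (Filter.Eventually.of_forall fun x => ?_)
          dsimp only
          rw [hMeq x]
    _ = ∫ t, f t * ∫ u, (u - t) * g u := key1
    _ = ∫ t, ((-a) * f t - t * f t) := by
          refine integral_congr_ae (Filter.Eventually.of_forall fun t => ?_)
          dsimp only
          rw [inner1 t]; ring
    _ = (-a) * (∫ t, f t) - a := by
          rw [integral_sub (hfi.const_mul _) hfi1, integral_const_mul, ← ha]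
    _ = -(2*a) := by rw [Af]; ring
  have I1zero : ∫ x, x * M x = 0 := by
    have h1 : ∫ x, (-x) * M (-x) = ∫ x, x * M x :=
      integral_neg_eq_self (fun x => x * M x) volume
    have h2 : ∫ x, (-x) * M (-x) = - ∫ x, x * M x := by
      have e : (fun x : ℝ => (-x) * M (-x)) = fun x => -(x * M x) := by
        funext x; rw [← hMeven x]; ring
      rw [e, integral_neg]
    linarith
  have ha0 : a = 0 := by rw [I1] at I1zero; linarith
  -- second moment of M
  have key2 := moment_formula f g (fun x => x^2) hf_meas hg_meas hf_supp hg0 hf1 hg1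
    (continuous_pow 2)
  have I2 : ∫ x, x^2 * M x = 2/3 := by
    calc ∫ x, x^2 * M x = ∫ x, x^2 * ∫ t, f t * g (x + t) := by
          refine integral_congr_ae (Filter.Eventually.of_forall fun x => ?_)
          dsimp only
          rw [hMeq x]
    _ = ∫ t, f t * ∫ u, (u - t)^2 * g u := key2
    _ = ∫ t, (((2/3 - b) + 0) * f t + t^2 * f t) := by
          refine integral_congr_ae (Filter.Eventually.of_forall fun t => ?_)
          dsimp only
          rw [inner2 t, ha0]; ring
    _ = ((2/3 - b) + 0) * (∫ t, f t) + b := by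
          rw [integral_add (hfi.const_mul _) hfi2, integral_const_mul, ← hb]
    _ = 2/3 := by rw [Af]; ring
  -- integrability of x^2 * M x
  have hXint : Integrable (fun x => x^2 * M x) := by
    have h := (prod_int f g (fun x => x^2) hf_meas hg_meas hf_supp hg0 hf1 hg1
      (continuous_pow 2)).integral_prod_left
    refine h.congr (Filter.Eventually.of_forall fun x => ?_)
    dsimp only
    rw [integral_const_mul, ← hMeq x]
  -- M vanishes outside [-2, 2]
  have hMout : ∀ x, x ∉ Icc (-2:ℝ) 2 → M x = 0 := by
    intro x hx
    rw [hMeq x]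
    have hz : ∀ t : ℝ, f t * g (x + t) = 0 := by
      intro t
      by_cases ht : t ∈ Icc (-1:ℝ) 1
      · have hxt0 : x + t ∉ Icc (-1:ℝ) 1 := by
          simp only [mem_Icc, not_and_or, not_le] at hx ⊢
          simp only [mem_Icc] at ht
          rcases hx with h | h
          · exact Or.inl (by linarith [ht.2])
          · exact Or.inr (by linarith [ht.1])
        rw [hg0 _ hxt0, mul_zero]
      · rw [hf_supp t ht, zero_mul]
    simp only [hz, integral_zero]
  -- conclude
  have hsplit : (∫ x in (-2:ℝ)..0, x^2 * M x) + ∫ x in (0:ℝ)..2, x^2 * M x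
      = ∫ x in (-2:ℝ)..2, x^2 * M x :=
    intervalIntegral.integral_add_adjacent_intervals hXint.intervalIntegrable
      hXint.intervalIntegrable
  have hfull : ∫ x in (-2:ℝ)..2, x^2 * M x = 2/3 := by
    rw [← I2, ← setIntegral_eq_integral_of_forall_compl_eq_zero
        (s := Icc (-2:ℝ) 2) (fun x hx => by rw [hMout x hx, mul_zero]),
      integral_Icc_eq_integral_Ioc,
      ← intervalIntegral.integral_of_le (by norm_num : (-2:ℝ) ≤ 2)]
  have heven : ∫ x in (-2:ℝ)..0, x^2 * M x = ∫ x in (0:ℝ)..2, x^2 * M x := by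
    have h := intervalIntegral.integral_comp_neg (a := (0:ℝ)) (b := 2)
      (fun x => x^2 * M x)
    norm_num at h
    rw [← h]
    refine intervalIntegral.integral_congr fun x _ => ?_
    rw [← hMeven x]
  linarith
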